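/- For every integer n ≥ 0, p̄(n) + ∑_{j≥1} (−1)^j [ p̄(n − j(3j−1)/2) + p̄(n − j(3j+1)/2) ] = p_d(n), where the sum is finite under the convention p̄(m) = 0 for m < 0. -/

import Mathlib

/-- `p n` is the number of (unrestricted) partitions of `n`. -/
noncomputable def p (n : ℕ) : ℕ := Fintype.card (Nat.Partition n)

/-- `pd n` is the number of partitions of `n` into distinct parts. -/
def pd (n : ℕ) : ℕ := (Nat.Partition.distincts n).card

/-- `pbar n` is the number of overpartitions of `n`. -/
noncomputable def pbar (n : ℕ) : ℕ := ∑ k ∈ Finset.range (n + 1), pd k * p (n - k)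

/-- `pbarZ` extends `pbar` to `ℤ` by the convention `pbar m = 0` for `m < 0`. -/
noncomputable def pbarZ (x : ℤ) : ℤ := if 0 ≤ x then (pbar x.toNat : ℤ) else 0

namespace EulerAux

open Multiset

def T (j : ℤ) : ℤ := j * (3*j+1) / 2

lemma two_T (j : ℤ) : 2 * T j = j * (3*j+1) := by
  have h : (2:ℤ) ∣ j*(3*j+1) := by
    rcases Int.even_or_odd j with ⟨k,hk⟩|⟨k,hk⟩
    · exact ⟨k*(3*j+1), by rw [hk]; ring⟩
    · exact ⟨j*(3*k+2), by rw [hk]; ring⟩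
  obtain ⟨c, hc⟩ := h
  rw [T, hc, Int.mul_ediv_cancel_left _ two_ne_zero]

lemma abs_le_T (j : ℤ) : |j| ≤ T j := by
  have h := two_T j
  rcases abs_cases j with ⟨h1, h2⟩ | ⟨h1, h2⟩ <;> rw [h1] <;> nlinarith [sq_nonneg j, sq_nonneg (j+1)]

lemma T_succ (j : ℤ) : T (j+1) = T j + 3*j + 2 := by
  have h1 := two_T j
  have h2 := two_T (j+1)
  have h3 : (j+1) * (3*(j+1)+1) = j*(3*j+1) + 6*j + 4 := by ring
  linarith

lemma T_pred (j : ℤ) : T (j-1) = T j - 3*j + 1 := by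
  have h1 := two_T j
  have h2 := two_T (j-1)
  have h3 : (j-1) * (3*(j-1)+1) = j*(3*j+1) - 6*j + 2 := by ring
  linarith

lemma T_nonneg (j : ℤ) : 0 ≤ T j := le_trans (abs_nonneg j) (abs_le_T j)

def sign (j : ℤ) : ℤ := if Even j then 1 else -1

lemma sign_add_one (j : ℤ) : sign (j+1) = - sign j := by
  rcases Int.even_or_odd j with h | h
  · simp [sign, h, Int.even_add_one, Int.not_even_iff_odd, h.add_one]
  · simp [sign, Int.not_even_iff_odd.2 h, h.add_one]

lemma sign_sub_one (j : ℤ) : sign (j-1) = - sign j := by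
  have h := sign_add_one (j-1)
  simp only [sub_add_cancel] at h
  rw [h]; ring

/-- sum after mapping +1 -/
lemma sum_map_add_one (s : Multiset ℕ) : (s.map (· + 1)).sum = s.sum + s.card := by
  induction s using Multiset.induction_on with
  | empty => simp
  | cons a s ih => simp [ih]; ring

lemma sum_map_sub_one (s : Multiset ℕ) (h : ∀ i ∈ s, 1 ≤ i) :
    (s.map (· - 1)).sum + s.card = s.sum := by
  induction s using Multiset.induction_on with
  | empty => simp
  | cons a s ih =>
    have ha := h a (mem_cons_self a s)
    have := ih (fun i hi => h i (mem_cons_of_mem hi))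
    simp only [map_cons, sum_cons, card_cons]
    omega

lemma sup_mem {s : Multiset ℕ} (h : s ≠ 0) : s.sup ∈ s := by
  induction s using Multiset.induction_on with
  | empty => simp at h
  | cons a s ih =>
    rcases eq_or_ne s 0 with rfl | hs
    · simp
    · have := ih hs
      simp only [sup_cons]
      rcases le_total a s.sup with hle | hle
      · rw [sup_eq_right.2 hle]; exact mem_cons_of_mem this
      · rw [sup_eq_left.2 hle]; exact mem_cons_self a s


noncomputable def pZ (x : ℤ) : ℤ := if 0 ≤ x then (p x.toNat : ℤ) else 0

def N (m : ℕ) (j : ℤ) : ℕ := ((m:ℤ) - T j).toNat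

noncomputable def J (m : ℕ) : Finset ℤ := (Finset.Icc (-(m:ℤ)) (m:ℤ)).filter (fun j => T j ≤ (m:ℤ))

lemma mem_J {m : ℕ} {j : ℤ} : j ∈ J m ↔ T j ≤ (m:ℤ) := by
  simp only [J, Finset.mem_filter, Finset.mem_Icc, and_iff_right_iff_imp]
  intro hT
  have := abs_le_T j
  have := abs_nonneg j
  constructor <;> [skip; skip] <;> · rw [abs_le] at *; omega

noncomputable def S (m : ℕ) : Finset (ℤ × Multiset ℕ) :=
  (J m).biUnion
    (fun j => Finset.univ.image (fun c : Nat.Partition (N m j) => (j, c.parts)))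

lemma mem_S {m : ℕ} {x : ℤ × Multiset ℕ} :
    x ∈ S m ↔ T x.1 ≤ (m:ℤ) ∧ (∀ i ∈ x.2, 0 < i) ∧ (x.2.sum : ℤ) = (m:ℤ) - T x.1 := by
  obtain ⟨j, c⟩ := x
  dsimp only
  constructor
  · intro hx
    simp only [S, Finset.mem_biUnion, Finset.mem_image, Finset.mem_univ, true_and] at hx
    obtain ⟨j', hj', d, hd⟩ := hx
    have h1 : j' = j := congrArg Prod.fst hd
    have h2 : d.parts = c := congrArg Prod.snd hd
    subst h1
    have h3 : c.sum = N m j' := h2 ▸ d.parts_sum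
    have h4 := mem_J.1 hj'
    refine ⟨h4, fun i hi => d.parts_pos (h2 ▸ hi), ?_⟩
    show (c.sum : ℤ) = (m:ℤ) - T j'
    simp only [N] at h3
    omega
  · rintro ⟨hT, hpos, hsum⟩
    have hc : c.sum = N m j := by simp only [N]; omega
    refine Finset.mem_biUnion.2 ⟨j, mem_J.2 hT, ?_⟩
    exact Finset.mem_image.2 ⟨⟨c, fun {i} hi => hpos i hi, hc⟩, Finset.mem_univ _, rfl⟩

lemma sum_S (m : ℕ) :
    ∑ x ∈ S m, sign x.1 = ∑ j ∈ J m, sign j * (p (N m j) : ℤ) := by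
  rw [S, Finset.sum_biUnion]
  · refine Finset.sum_congr rfl fun j _ => ?_
    rw [Finset.sum_image (by intro a _ b _ h; exact Nat.Partition.ext (congrArg Prod.snd h))]
    simp [p, mul_comm]
  · intro a _ b _ hab
    simp only [Function.onFun]
    rw [Finset.disjoint_left]
    intro x hx hx'
    simp only [Finset.mem_image, Finset.mem_univ, true_and] at hx hx'
    obtain ⟨c, rfl⟩ := hx
    obtain ⟨d, hd⟩ := hx'
    exact hab (congrArg Prod.fst hd).symm


def gmap (x : ℤ × Multiset ℕ) : ℤ × Multiset ℕ :=
  if 3*x.1 + (Multiset.card x.2 : ℤ) + 1 ≤ (x.2.sup : ℤ) then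
    if x.2 = 0 then (x.1+1, Multiset.replicate (-3*x.1-2).toNat 1)
    else (x.1+1, (x.2.erase x.2.sup).map (· + 1) +
      Multiset.replicate ((x.2.sup:ℤ) - 3*x.1 - (Multiset.card x.2 : ℤ) - 1).toNat 1)
  else
    (x.1-1, (x.2.filter (fun i => 2 ≤ i)).map (· - 1) +
      (if 2 ≤ (Multiset.card x.2 : ℤ) + 3*x.1 then {((Multiset.card x.2 : ℤ) + 3*x.1 - 1).toNat} else 0))

lemma gmap_A0 (j : ℤ) (c : Multiset ℕ) (h : 3*j + (Multiset.card c : ℤ) + 1 ≤ (c.sup : ℤ))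
    (h0 : c = 0) : gmap (j, c) = (j+1, Multiset.replicate (-3*j-2).toNat 1) := by
  rw [gmap]; dsimp only; rw [if_pos h, if_pos h0]

lemma gmap_A (j : ℤ) (c : Multiset ℕ) (h : 3*j + (Multiset.card c : ℤ) + 1 ≤ (c.sup : ℤ))
    (h0 : c ≠ 0) : gmap (j, c) = (j+1, (c.erase c.sup).map (· + 1) +
      Multiset.replicate ((c.sup:ℤ) - 3*j - (Multiset.card c : ℤ) - 1).toNat 1) := by
  rw [gmap]; dsimp only; rw [if_pos h, if_neg h0]

lemma gmap_B (j : ℤ) (c : Multiset ℕ) (h : ¬ (3*j + (Multiset.card c : ℤ) + 1 ≤ (c.sup : ℤ))) :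
    gmap (j, c) = (j-1, (c.filter (fun i => 2 ≤ i)).map (· - 1) +
      (if 2 ≤ (Multiset.card c : ℤ) + 3*j then {((Multiset.card c : ℤ) + 3*j - 1).toNat} else 0)) := by
  rw [gmap]; dsimp only; rw [if_neg h]

lemma gmap_fst (x : ℤ × Multiset ℕ) : (gmap x).1 = x.1 + 1 ∨ (gmap x).1 = x.1 - 1 := by
  rw [gmap]
  split
  · split <;> left <;> rfl
  · right; rfl

lemma sign_gmap (x : ℤ × Multiset ℕ) : sign x.1 + sign (gmap x).1 = 0 := by
  rcases gmap_fst x with h | h <;> rw [h]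
  · rw [sign_add_one]; ring
  · rw [sign_sub_one]; ring

lemma gmap_ne (x : ℤ × Multiset ℕ) : gmap x ≠ x := by
  intro h
  rcases gmap_fst x with h' | h' <;> rw [h] at h' <;> omega


lemma caseA (j : ℤ) (c : Multiset ℕ) (hpos : ∀ i ∈ c, 0 < i) (h0 : c ≠ 0)
    (hA : 3*j + (Multiset.card c : ℤ) + 1 ≤ (c.sup : ℤ)) :
    (∀ i ∈ (gmap (j,c)).2, 0 < i) ∧
    ((gmap (j,c)).2.sum : ℤ) = (c.sum : ℤ) - 3*j - 2 ∧
    gmap (gmap (j,c)) = (j, c) := by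
  have hmem : c.sup ∈ c := sup_mem h0
  have ha1 : 1 ≤ c.sup := hpos _ hmem
  have hce : c.sup ::ₘ c.erase c.sup = c := Multiset.cons_erase hmem
  have hcard : Multiset.card c = Multiset.card (c.erase c.sup) + 1 := by
    have h1 := Multiset.card_erase_of_mem hmem
    rw [Nat.pred_eq_sub_one] at h1
    have h2 : 0 < Multiset.card c := Multiset.card_pos.2 h0
    omega
  have hsum : c.sum = c.sup + (c.erase c.sup).sum := by
    conv_lhs => rw [← hce]
    simp
  have hpad : (0:ℤ) ≤ (c.sup:ℤ) - 3*j - (Multiset.card c : ℤ) - 1 := by linarith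
  have hpadc : (((c.sup:ℤ) - 3*j - (Multiset.card c:ℤ) - 1).toNat : ℤ)
      = (c.sup:ℤ) - 3*j - (Multiset.card c:ℤ) - 1 := Int.toNat_of_nonneg hpad
  rw [gmap_A j c hA h0]
  set a := c.sup with hadef
  set e := c.erase a with hedef
  set pad := ((a:ℤ) - 3*j - (Multiset.card c : ℤ) - 1).toNat with hpaddef
  set μ := e.map (· + 1) + Multiset.replicate pad 1 with hμ
  have hμmem : ∀ i ∈ μ, 1 ≤ i ∧ i ≤ a + 1 := by
    intro i hi
    rw [hμ, Multiset.mem_add] at hi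
    rcases hi with hi | hi
    · obtain ⟨x, hx, rfl⟩ := Multiset.mem_map.1 hi
      have hx' : x ∈ c := Multiset.mem_of_mem_erase hx
      have := Multiset.le_sup hx'
      exact ⟨by omega, by omega⟩
    · rw [Multiset.eq_of_mem_replicate hi]; omega
  have hμpos : ∀ i ∈ μ, 0 < i := fun i hi => (hμmem i hi).1
  have hcardμ : Multiset.card μ = Multiset.card e + pad := by
    rw [hμ]; simp
  have hμcard : (Multiset.card μ : ℤ) = (a:ℤ) - 3*j - 2 := by omega
  have hsumμ : μ.sum = (e.sum + Multiset.card e) + pad := by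
    rw [hμ, Multiset.sum_add, sum_map_add_one, Multiset.sum_replicate]
    simp [mul_comm]
  have hμsum : (μ.sum : ℤ) = (c.sum:ℤ) - 3*j - 2 := by omega
  refine ⟨hμpos, hμsum, ?_⟩
  have hsupμ : (μ.sup : ℤ) ≤ (a:ℤ) + 1 := by
    have h : μ.sup ≤ a + 1 := Multiset.sup_le.2 fun b hb => (hμmem b hb).2
    exact_mod_cast h
  have hnotA : ¬ (3*(j+1) + (Multiset.card μ : ℤ) + 1 ≤ (μ.sup : ℤ)) := by
    rw [hμcard]; omega
  rw [gmap_B (j+1) μ hnotA]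
  have hfil : μ.filter (fun i => 2 ≤ i) = e.map (· + 1) := by
    rw [hμ, Multiset.filter_add]
    have h1 : (e.map (· + 1)).filter (fun i => 2 ≤ i) = e.map (· + 1) :=
      Multiset.filter_eq_self.2 (fun b hb => by
        obtain ⟨x, hx, rfl⟩ := Multiset.mem_map.1 hb
        have := hpos x (Multiset.mem_of_mem_erase hx)
        omega)
    have h2 : (Multiset.replicate pad 1).filter (fun i => 2 ≤ i) = 0 :=
      Multiset.filter_eq_nil.2 (fun b hb => by rw [Multiset.eq_of_mem_replicate hb]; omega)
    rw [h1, h2, add_zero]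
  have hmap : (e.map (· + 1)).map (· - 1) = e := by
    rw [Multiset.map_map]
    have : Multiset.map ((· - 1) ∘ (· + 1)) e = Multiset.map id e :=
      Multiset.map_congr rfl (fun x _ => by simp)
    rw [this, Multiset.map_id]
  have hsing : (2:ℤ) ≤ (Multiset.card μ : ℤ) + 3*(j+1) := by rw [hμcard]; omega
  rw [if_pos hsing, hfil, hmap]
  have hval : ((Multiset.card μ : ℤ) + 3*(j+1) - 1).toNat = a := by rw [hμcard]; omega
  rw [hval]
  have hea : e + {a} = c := by rw [add_comm, Multiset.singleton_add, hce]
  rw [hea]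
  norm_num


lemma caseA0 (j : ℤ) (hj : 3*j + 1 ≤ 0) :
    (∀ i ∈ (gmap (j,(0:Multiset ℕ))).2, 0 < i) ∧
    ((gmap (j,(0:Multiset ℕ))).2.sum : ℤ) = - 3*j - 2 ∧
    gmap (gmap (j,(0:Multiset ℕ))) = (j, (0:Multiset ℕ)) := by
  have hA : 3*j + (Multiset.card (0:Multiset ℕ) : ℤ) + 1 ≤ ((0:Multiset ℕ).sup : ℤ) := by
    simp; omega
  rw [gmap_A0 j 0 hA rfl]
  set q := (-3*j-2).toNat with hq
  have hqc : (q:ℤ) = -3*j-2 := Int.toNat_of_nonneg (by omega)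
  set μ := Multiset.replicate q 1 with hμ
  have hpos : ∀ i ∈ μ, 0 < i := fun i hi => by rw [Multiset.eq_of_mem_replicate hi]; omega
  have hsumμ : μ.sum = q := by rw [hμ, Multiset.sum_replicate]; simp
  have hcardμ : Multiset.card μ = q := by rw [hμ]; simp
  refine ⟨hpos, by rw [hsumμ]; omega, ?_⟩
  have hsupμ : μ.sup ≤ 1 := Multiset.sup_le.2 fun b hb => by
    rw [Multiset.eq_of_mem_replicate hb]
  have hnotA : ¬ (3*(j+1) + (Multiset.card μ : ℤ) + 1 ≤ (μ.sup : ℤ)) := by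
    have : (μ.sup : ℤ) ≤ 1 := by exact_mod_cast hsupμ
    rw [hcardμ]; omega
  rw [gmap_B (j+1) μ hnotA]
  rw [if_neg (by rw [hcardμ]; omega)]
  have hfil : μ.filter (fun i => 2 ≤ i) = 0 :=
    Multiset.filter_eq_nil.2 (fun b hb => by rw [Multiset.eq_of_mem_replicate hb]; omega)
  rw [hfil]
  norm_num

lemma caseB (j : ℤ) (c : Multiset ℕ) (hpos : ∀ i ∈ c, 0 < i)
    (hB : ¬ (3*j + (Multiset.card c : ℤ) + 1 ≤ (c.sup : ℤ)))
    (hb : 1 ≤ (Multiset.card c : ℤ) + 3*j) :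
    (∀ i ∈ (gmap (j,c)).2, 0 < i) ∧
    ((gmap (j,c)).2.sum : ℤ) = (c.sum : ℤ) + 3*j - 1 ∧
    gmap (gmap (j,c)) = (j, c) := by
  have hsuple : (c.sup : ℤ) ≤ 3*j + (Multiset.card c : ℤ) := by omega
  rw [gmap_B j c hB]
  dsimp only
  set c2 := c.filter (fun i => 2 ≤ i) with hc2def
  have hsplit : c2 + c.filter (fun i => ¬ 2 ≤ i) = c := Multiset.filter_add_not _ c
  set c1 := c.filter (fun i => ¬ 2 ≤ i) with hc1def
  have hc1rep : c1 = Multiset.replicate (Multiset.card c1) 1 := by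
    rw [Multiset.eq_replicate_card]
    intro b hb'
    have h1 := Multiset.of_mem_filter hb'
    have h2 := hpos b (Multiset.mem_of_mem_filter hb')
    omega
  have hcard : Multiset.card c = Multiset.card c2 + Multiset.card c1 := by
    conv_lhs => rw [← hsplit]
    simp
  have hsum : c.sum = c2.sum + Multiset.card c1 := by
    conv_lhs => rw [← hsplit]
    rw [Multiset.sum_add]
    congr 1
    conv_lhs => rw [hc1rep]
    rw [Multiset.sum_replicate]
    simp
  have hdec : (c2.map (· - 1)).sum + Multiset.card c2 = c2.sum :=
    sum_map_sub_one c2 (fun i hi => by have := Multiset.of_mem_filter hi; omega)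
  have hdeccard : Multiset.card (c2.map (· - 1)) = Multiset.card c2 := by simp
  have hmapinc : (c2.map (· - 1)).map (· + 1) = c2 := by
    rw [Multiset.map_map]
    have h : Multiset.map ((· + 1) ∘ (· - 1)) c2 = Multiset.map id c2 :=
      Multiset.map_congr rfl (fun x hx => by
        have := Multiset.of_mem_filter hx
        simp only [Function.comp_apply, id_eq]
        omega)
    rw [h, Multiset.map_id]
  by_cases h2 : (2:ℤ) ≤ (Multiset.card c : ℤ) + 3*j
  · rw [if_pos h2]
    set b := ((Multiset.card c : ℤ) + 3*j - 1).toNat with hbdef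
    have hbc : (b:ℤ) = (Multiset.card c:ℤ) + 3*j - 1 := Int.toNat_of_nonneg (by omega)
    have hb1 : 1 ≤ b := by omega
    set μ := c2.map (· - 1) + ({b} : Multiset ℕ) with hμ
    have hμcons : μ = b ::ₘ c2.map (· - 1) := by
      rw [hμ, add_comm, Multiset.singleton_add]
    have hposμ : ∀ i ∈ μ, 0 < i := by
      intro i hi
      rw [hμ, Multiset.mem_add] at hi
      rcases hi with hi | hi
      · obtain ⟨x, hx, rfl⟩ := Multiset.mem_map.1 hi
        have := Multiset.of_mem_filter hx
        omega
      · rw [Multiset.mem_singleton.1 hi]; omega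
    have hsumμ : μ.sum = (c2.map (· - 1)).sum + b := by
      rw [hμ, Multiset.sum_add, Multiset.sum_singleton]
    have hcardμ : Multiset.card μ = Multiset.card c2 + 1 := by
      rw [hμ]; simp
    refine ⟨hposμ, by omega, ?_⟩
    have hsupμ : μ.sup = b := by
      refine le_antisymm (Multiset.sup_le.2 fun x hx => ?_) (Multiset.le_sup (by
        rw [hμcons]; exact Multiset.mem_cons_self _ _))
      rw [hμ, Multiset.mem_add] at hx
      rcases hx with hx | hx
      · obtain ⟨y, hy, rfl⟩ := Multiset.mem_map.1 hx
        have h3 : y ∈ c := Multiset.mem_of_mem_filter hy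
        have h4 := Multiset.le_sup h3
        have h5 := Multiset.of_mem_filter hy
        omega
      · rw [Multiset.mem_singleton.1 hx]
    have hA' : 3*(j-1) + (Multiset.card μ : ℤ) + 1 ≤ (μ.sup : ℤ) := by
      rw [hsupμ, hcardμ]
      have : Multiset.card c2 ≤ Multiset.card c := by omega
      push_cast
      omega
    have hμne : μ ≠ 0 := by
      rw [hμcons]; exact Multiset.cons_ne_zero
    rw [gmap_A (j-1) μ hA' hμne]
    have herase : μ.erase μ.sup = c2.map (· - 1) := by
      rw [hsupμ, hμcons, Multiset.erase_cons_head]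
    have hpad : ((μ.sup:ℤ) - 3*(j-1) - (Multiset.card μ : ℤ) - 1).toNat = Multiset.card c1 := by
      rw [hsupμ, hcardμ]
      push_cast
      omega
    rw [herase, hmapinc, hpad, ← hc1rep, hsplit]
    norm_num
  · have ht1 : (Multiset.card c : ℤ) + 3*j = 1 := by omega
    rw [if_neg h2]
    have hall : ∀ i ∈ c, i = 1 := by
      intro i hi
      have h3 := Multiset.le_sup hi
      have h4 := hpos i hi
      omega
    have hcrep : c = Multiset.replicate (Multiset.card c) 1 := Multiset.eq_replicate_card.2 hall
    have hcsum : c.sum = Multiset.card c := by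
      conv_lhs => rw [hcrep]
      rw [Multiset.sum_replicate]; simp
    have hc2nil : c2 = 0 := by
      rw [hc2def]
      refine Multiset.filter_eq_nil.2 (fun x hx => ?_)
      have := hall x hx
      omega
    rw [hc2nil]
    have hz : (Multiset.map (· - 1) (0 : Multiset ℕ)) + (0 : Multiset ℕ) = 0 := by simp
    rw [hz]
    refine ⟨by simp, by rw [Multiset.sum_zero]; omega, ?_⟩
    have hA0' : 3*(j-1) + (Multiset.card (0:Multiset ℕ) : ℤ) + 1 ≤ ((0:Multiset ℕ).sup : ℤ) := by
      simp
      omega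
    rw [gmap_A0 (j-1) 0 hA0' rfl]
    have : (-3*(j-1)-2).toNat = Multiset.card c := by omega
    rw [this, ← hcrep]
    norm_num


lemma mem_S_of {m : ℕ} {j : ℤ} {c : Multiset ℕ} (hpos : ∀ i ∈ c, 0 < i)
    (hsum : (c.sum : ℤ) = (m:ℤ) - T j) : (j, c) ∈ S m := by
  rw [mem_S]
  have h := Int.natCast_nonneg c.sum
  exact ⟨by dsimp only; omega, hpos, hsum⟩

theorem gmap_good (m : ℕ) (hm : 1 ≤ m) (x : ℤ × Multiset ℕ) (hx : x ∈ S m) :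
    gmap x ∈ S m ∧ gmap (gmap x) = x := by
  obtain ⟨j, c⟩ := x
  rw [mem_S] at hx
  dsimp only at hx
  obtain ⟨hT, hpos, hsum⟩ := hx
  have hcube : ∀ y : ℤ × Multiset ℕ, ∀ j' : ℤ, (gmap y).1 = j' →
      (∀ i ∈ (gmap y).2, 0 < i) → ((gmap y).2.sum : ℤ) = (m:ℤ) - T j' → gmap y ∈ S m := by
    intro y j' hfst hp hs
    have : gmap y = (j', (gmap y).2) := by rw [Prod.ext_iff]; exact ⟨hfst, rfl⟩
    rw [this]
    exact mem_S_of hp hs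
  by_cases hA : 3*j + (Multiset.card c : ℤ) + 1 ≤ (c.sup : ℤ)
  · by_cases h0 : c = 0
    · subst h0
      have h1 : ((0:Multiset ℕ).sup : ℤ) = 0 := by simp
      have h2 : (Multiset.card (0:Multiset ℕ) : ℤ) = 0 := by simp
      rw [Multiset.sum_zero] at hsum
      have hj : 3*j + 1 ≤ 0 := by omega
      obtain ⟨hp, hs, hinv⟩ := caseA0 j hj
      refine ⟨?_, hinv⟩
      refine hcube _ (j+1) (by rw [gmap_A0 j 0 hA rfl]) hp ?_
      rw [hs, T_succ]
      omega
    · obtain ⟨hp, hs, hinv⟩ := caseA j c hpos h0 hA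
      refine ⟨?_, hinv⟩
      refine hcube _ (j+1) (by rw [gmap_A j c hA h0]) hp ?_
      rw [hs, T_succ]
      omega
  · have hb : 1 ≤ (Multiset.card c : ℤ) + 3*j := by
      by_contra hcon
      push_neg at hcon
      have hsup0 : (c.sup:ℤ) ≤ 0 := by omega
      have hc0 : c = 0 := by
        by_contra hne
        have h4 := hpos c.sup (sup_mem hne)
        omega
      subst hc0
      have h1 : ((0:Multiset ℕ).sup : ℤ) = 0 := by simp
      have h2 : (Multiset.card (0:Multiset ℕ) : ℤ) = 0 := by simp
      rw [Multiset.sum_zero] at hsum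
      have hj0 : j = 0 := by omega
      have hT0 : T 0 = 0 := by norm_num [T]
      rw [hj0, hT0] at hsum
      omega
    obtain ⟨hp, hs, hinv⟩ := caseB j c hpos hA hb
    refine ⟨?_, hinv⟩
    refine hcube _ (j-1) (by rw [gmap_B j c hA]) hp ?_
    rw [hs, T_pred]
    omega

theorem euler_J (m : ℕ) :
    ∑ j ∈ J m, sign j * (p (N m j) : ℤ) = if m = 0 then 1 else 0 := by
  rcases Nat.eq_zero_or_pos m with rfl | hm
  · have hJ : J 0 = {0} := by
      ext j
      rw [mem_J, Finset.mem_singleton]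
      constructor
      · intro h
        have h2 : |j| ≤ 0 := le_trans (abs_le_T j) (by exact_mod_cast h)
        exact abs_nonpos_iff.1 h2
      · rintro rfl
        norm_num [T]
    rw [hJ, if_pos rfl]
    have hN : N 0 0 = 0 := by norm_num [N, T]
    rw [Finset.sum_singleton, hN]
    have hp0 : p 0 = 1 := by
      rw [p]
      exact Fintype.card_unique
    rw [hp0]
    norm_num [sign]
  · rw [if_neg (by omega), ← sum_S]
    exact Finset.sum_involution (fun a _ => gmap a) (fun a _ => sign_gmap a)
      (fun a _ _ => gmap_ne a) (fun a ha => (gmap_good m hm a ha).1)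
      (fun a ha => (gmap_good m hm a ha).2)


lemma euler_Icc (m K : ℕ) (hK : m ≤ K) :
    ∑ j ∈ Finset.Icc (-(K:ℤ)) (K:ℤ), sign j * pZ ((m:ℤ) - T j) = if m = 0 then 1 else 0 := by
  rw [← euler_J m]
  have hsub : J m ⊆ Finset.Icc (-(K:ℤ)) (K:ℤ) := by
    intro j hj
    rw [mem_J] at hj
    have h1 := abs_le_T j
    rw [Finset.mem_Icc]
    rw [abs_le] at h1
    omega
  have h1 : ∑ j ∈ J m, sign j * (p (N m j) : ℤ) = ∑ j ∈ J m, sign j * pZ ((m:ℤ) - T j) := by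
    refine Finset.sum_congr rfl fun j hj => ?_
    rw [mem_J] at hj
    simp only [pZ]
    rw [if_pos (by omega)]
    rfl
  rw [h1]
  refine (Finset.sum_subset hsub fun j _ hj => ?_).symm
  have hj' : ¬ T j ≤ (m:ℤ) := fun h => hj (mem_J.2 h)
  simp only [pZ]
  rw [if_neg (by omega), mul_zero]


lemma sum_Icc_neg (K : ℕ) (f : ℤ → ℤ) (hK : 1 ≤ K) :
    ∑ j ∈ Finset.Icc (-(K:ℤ)) (K:ℤ), f j
      = f 0 + ∑ k ∈ Finset.Icc (1:ℤ) (K:ℤ), (f k + f (-k)) := by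
  have h1 : Finset.Icc (-(K:ℤ)) (K:ℤ) = Finset.Icc (-(K:ℤ)) (-1) ∪ Finset.Icc (0:ℤ) (K:ℤ) := by
    ext j; simp only [Finset.mem_Icc, Finset.mem_union]; omega
  have hd : Disjoint (Finset.Icc (-(K:ℤ)) (-1)) (Finset.Icc (0:ℤ) (K:ℤ)) := by
    rw [Finset.disjoint_left]
    intro a ha hb
    simp only [Finset.mem_Icc] at ha hb
    omega
  rw [h1, Finset.sum_union hd]
  have h2 : Finset.Icc (-(K:ℤ)) (-1) = (Finset.Icc (1:ℤ) (K:ℤ)).image Neg.neg := by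
    ext j
    simp only [Finset.mem_Icc, Finset.mem_image]
    constructor
    · intro h; exact ⟨-j, by omega, by omega⟩
    · rintro ⟨k, hk, rfl⟩; omega
  rw [h2, Finset.sum_image (by intro a _ b _ h; omega)]
  have h3 : Finset.Icc (0:ℤ) (K:ℤ) = insert (0:ℤ) (Finset.Icc 1 (K:ℤ)) := by
    ext j; simp only [Finset.mem_Icc, Finset.mem_insert]; omega
  rw [h3, Finset.sum_insert (by simp)]
  rw [Finset.sum_add_distrib]
  ring

lemma Icc_to_range (K : ℕ) (g : ℤ → ℤ) :
    ∑ k ∈ Finset.Icc (1:ℤ) (K:ℤ), g k = ∑ i ∈ Finset.range K, g ((i:ℤ)+1) := by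
  rw [← Finset.sum_image (g := fun i : ℕ => (i:ℤ)+1)
    (by intro a _ b _ h; have h' : (a:ℤ)+1 = (b:ℤ)+1 := h; omega)]
  congr 1
  ext j
  simp only [Finset.mem_Icc, Finset.mem_image, Finset.mem_range]
  constructor
  · intro h
    exact ⟨(j-1).toNat, by omega, by omega⟩
  · rintro ⟨i, hi, rfl⟩
    omega

lemma pZ_natCast (a : ℕ) : pZ (a : ℤ) = (p a : ℤ) := by
  rw [pZ, if_pos (Int.natCast_nonneg a), Int.toNat_natCast]

lemma euler_range (m K : ℕ) (hmK : m ≤ K) (hK : 1 ≤ K) :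
    (p m : ℤ) + ∑ i ∈ Finset.range K,
        sign ((i:ℤ)+1) * (pZ ((m:ℤ) - T (-((i:ℤ)+1))) + pZ ((m:ℤ) - T ((i:ℤ)+1)))
      = if m = 0 then 1 else 0 := by
  rw [← euler_Icc m K hmK, sum_Icc_neg K _ hK, Icc_to_range K]
  have hT0 : T 0 = 0 := by norm_num [T]
  have hs0 : sign 0 = 1 := by norm_num [sign]
  rw [hT0, hs0]
  have h0 : (m:ℤ) - 0 = ((m:ℕ):ℤ) := by ring
  rw [h0, pZ_natCast, one_mul]
  congr 1
  refine Finset.sum_congr rfl fun i _ => ?_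
  have hsgn : sign (-((i:ℤ)+1)) = sign ((i:ℤ)+1) := by
    simp only [sign, even_neg]
  rw [hsgn]
  ring


lemma T_neg (k : ℤ) : T (-k) = k * (3*k-1) / 2 := by
  have h1 := two_T (-k)
  have h2 : (-k)*(3*(-k)+1) = k*(3*k-1) := by ring
  rw [h2] at h1
  rw [← h1, Int.mul_ediv_cancel_left _ two_ne_zero]

lemma sign_natCast_succ (j : ℕ) : sign ((j:ℤ)+1) = (-1:ℤ)^(j+1) := by
  have h : ((j:ℤ)+1) = ((j+1 : ℕ) : ℤ) := by push_cast; ring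
  rw [h, sign]
  rcases Nat.even_or_odd (j+1) with he | ho
  · rw [if_pos (by exact_mod_cast he), he.neg_one_pow]
  · rw [if_neg (by rw [Int.even_coe_nat]; exact (Nat.not_even_iff_odd).2 ho), ho.neg_one_pow]

lemma pbarZ_eq (n : ℕ) (x : ℤ) (hx : x ≤ (n:ℤ)) :
    pbarZ x = ∑ i ∈ Finset.range (n+1), (pd i : ℤ) * pZ (x - (i:ℤ)) := by
  rcases le_or_gt 0 x with hx0 | hx0
  · rw [pbarZ, if_pos hx0]
    have hxa : x = (x.toNat : ℤ) := (Int.toNat_of_nonneg hx0).symm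
    set a := x.toNat with ha
    have han : a ≤ n := by omega
    have h1 : (pbar a : ℤ) = ∑ i ∈ Finset.range (a+1), (pd i : ℤ) * (p (a - i) : ℤ) := by
      rw [pbar]; push_cast; rfl
    rw [h1]
    have h2 : ∀ i ∈ Finset.range (a+1),
        (pd i : ℤ) * (p (a-i) : ℤ) = (pd i : ℤ) * pZ (x - (i:ℤ)) := by
      intro i hi
      rw [Finset.mem_range] at hi
      simp only [pZ]
      rw [if_pos (by omega)]
      have h3 : (x - (i:ℤ)).toNat = a - i := by omega
      rw [h3]
    rw [Finset.sum_congr rfl h2]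
    refine Finset.sum_subset (Finset.range_subset_range.2 (by omega)) ?_
    intro i hi hni
    rw [Finset.mem_range] at hi hni
    simp only [pZ]
    rw [if_neg (by omega), mul_zero]
  · rw [pbarZ, if_neg (by omega)]
    symm
    refine Finset.sum_eq_zero fun i _ => ?_
    simp only [pZ]
    rw [if_neg (by omega), mul_zero]

end EulerAux


open EulerAux in
/-- For every `n ≥ 0`,
`p̄(n) + ∑_{j ≥ 1} (-1)^j [p̄(n - j(3j-1)/2) + p̄(n - j(3j+1)/2)] = p_d(n)`. -/
theorem stmt3 (n : ℕ) :
    (pbar n : ℤ) +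
      ∑' j : ℕ, (-1 : ℤ) ^ (j + 1) *
        (pbarZ ((n : ℤ) - ((j : ℤ) + 1) * (3 * ((j : ℤ) + 1) - 1) / 2) +
          pbarZ ((n : ℤ) - ((j : ℤ) + 1) * (3 * ((j : ℤ) + 1) + 1) / 2)) =
      (pd n : ℤ) := by
  classical
  have key : ∀ j : ℕ, (-1 : ℤ) ^ (j + 1) *
        (pbarZ ((n : ℤ) - ((j : ℤ) + 1) * (3 * ((j : ℤ) + 1) - 1) / 2) +
          pbarZ ((n : ℤ) - ((j : ℤ) + 1) * (3 * ((j : ℤ) + 1) + 1) / 2))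
      = sign ((j:ℤ)+1) * (pbarZ ((n:ℤ) - T (-((j:ℤ)+1))) + pbarZ ((n:ℤ) - T ((j:ℤ)+1))) := by
    intro j
    rw [sign_natCast_succ, T_neg]
    rfl
  have htc : (∑' j : ℕ, (-1 : ℤ) ^ (j + 1) *
        (pbarZ ((n : ℤ) - ((j : ℤ) + 1) * (3 * ((j : ℤ) + 1) - 1) / 2) +
          pbarZ ((n : ℤ) - ((j : ℤ) + 1) * (3 * ((j : ℤ) + 1) + 1) / 2)))
      = ∑' j : ℕ, sign ((j:ℤ)+1) * (pbarZ ((n:ℤ) - T (-((j:ℤ)+1))) + pbarZ ((n:ℤ) - T ((j:ℤ)+1))) :=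
    tsum_congr key
  rw [htc]
  have hzero : ∀ j ∉ Finset.range (n+1),
      sign ((j:ℤ)+1) * (pbarZ ((n:ℤ) - T (-((j:ℤ)+1))) + pbarZ ((n:ℤ) - T ((j:ℤ)+1))) = 0 := by
    intro j hj
    rw [Finset.mem_range] at hj
    have e1 : ((j:ℤ)+1) ≤ T ((j:ℤ)+1) := le_trans (le_abs_self _) (abs_le_T _)
    have e2 : ((j:ℤ)+1) ≤ T (-((j:ℤ)+1)) := by
      have h := abs_le_T (-((j:ℤ)+1))
      rw [abs_neg] at h
      exact le_trans (le_abs_self _) h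
    simp only [pbarZ]
    rw [if_neg (by omega), if_neg (by omega)]
    ring
  rw [tsum_eq_sum hzero]
  have hpbar : (pbar n : ℤ) = pbarZ (n:ℤ) := by
    simp only [pbarZ]
    rw [if_pos (Int.natCast_nonneg n), Int.toNat_natCast]
  rw [hpbar, pbarZ_eq n (n:ℤ) le_rfl]
  have hexp : ∀ j ∈ Finset.range (n+1),
      sign ((j:ℤ)+1) * (pbarZ ((n:ℤ) - T (-((j:ℤ)+1))) + pbarZ ((n:ℤ) - T ((j:ℤ)+1)))
      = ∑ i ∈ Finset.range (n+1), (pd i:ℤ) *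
          (sign ((j:ℤ)+1) * (pZ ((n:ℤ) - T (-((j:ℤ)+1)) - (i:ℤ)) + pZ ((n:ℤ) - T ((j:ℤ)+1) - (i:ℤ)))) := by
    intro j _
    rw [pbarZ_eq n _ (by have := T_nonneg (-((j:ℤ)+1)); omega),
        pbarZ_eq n _ (by have := T_nonneg ((j:ℤ)+1); omega)]
    rw [← Finset.sum_add_distrib, Finset.mul_sum]
    refine Finset.sum_congr rfl fun i _ => ?_
    ring
  rw [Finset.sum_congr rfl hexp, Finset.sum_comm, ← Finset.sum_add_distrib]
  have hfin : ∀ i ∈ Finset.range (n+1),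
      ((pd i:ℤ) * pZ ((n:ℤ) - (i:ℤ)) + ∑ j ∈ Finset.range (n+1), (pd i:ℤ) *
          (sign ((j:ℤ)+1) * (pZ ((n:ℤ) - T (-((j:ℤ)+1)) - (i:ℤ)) + pZ ((n:ℤ) - T ((j:ℤ)+1) - (i:ℤ)))))
      = if i = n then (pd n : ℤ) else 0 := by
    intro i hi
    rw [Finset.mem_range] at hi
    have hin : i ≤ n := by omega
    rw [← Finset.mul_sum, ← mul_add]
    have hm : ((n - i : ℕ) : ℤ) = (n:ℤ) - (i:ℤ) := by omega
    have h1 : pZ ((n:ℤ) - (i:ℤ)) = (p (n-i) : ℤ) := by rw [← hm, pZ_natCast]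
    rw [h1]
    have h2 : ∑ j ∈ Finset.range (n+1),
        sign ((j:ℤ)+1) * (pZ ((n:ℤ) - T (-((j:ℤ)+1)) - (i:ℤ)) + pZ ((n:ℤ) - T ((j:ℤ)+1) - (i:ℤ)))
        = ∑ j ∈ Finset.range (n+1),
        sign ((j:ℤ)+1) * (pZ (((n-i:ℕ):ℤ) - T (-((j:ℤ)+1))) + pZ (((n-i:ℕ):ℤ) - T ((j:ℤ)+1))) := by
      refine Finset.sum_congr rfl fun j _ => ?_
      have ha : (n:ℤ) - T (-((j:ℤ)+1)) - (i:ℤ) = ((n-i:ℕ):ℤ) - T (-((j:ℤ)+1)) := by omega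
      have hb : (n:ℤ) - T ((j:ℤ)+1) - (i:ℤ) = ((n-i:ℕ):ℤ) - T ((j:ℤ)+1) := by omega
      rw [ha, hb]
    rw [h2, euler_range (n-i) (n+1) (by omega) (by omega)]
    rcases eq_or_ne i n with rfl | hne
    · rw [if_pos (by omega), if_pos rfl, mul_one]
    · rw [if_neg (by omega), if_neg hne, mul_zero]
  rw [Finset.sum_congr rfl hfin, Finset.sum_ite_eq' (Finset.range (n+1)) n (fun _ => (pd n : ℤ))]
  rw [if_pos (Finset.self_mem_range_succ n)]
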